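/- The subgroup of G_n generated by the set of all involutions of G_n equals the kernel of the group homomorphism A : G_n → 𝕋 defined by A(α, σ) = 2·(α_1 + ⋯ + α_n). -/

import Mathlib

abbrev Circle1 : Type := AddCircle (1 : ℝ)

abbrev Gn (n : ℕ) : Type := (Fin n → Circle1) × Equiv.Perm (Fin n)

namespace Gn
variable {n : ℕ}

noncomputable instance : Mul (Gn n) := ⟨fun f g => ⟨fun j => g.1 j + f.1 (g.2 j), f.2 * g.2⟩⟩
noncomputable instance : One (Gn n) := ⟨⟨fun _ => 0, 1⟩⟩
noncomputable instance : Inv (Gn n) := ⟨fun f => ⟨fun j => -f.1 (f.2⁻¹ j), f.2⁻¹⟩⟩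

noncomputable instance : Group (Gn n) where
  mul_assoc f g h := Prod.ext (funext fun j => (add_assoc _ _ _).symm) rfl
  one_mul f := Prod.ext (funext fun j => add_zero _) (one_mul _)
  mul_one f := Prod.ext (funext fun j => zero_add _) (mul_one _)
  inv_mul_cancel f := Prod.ext
    (funext fun j => show f.1 j + -f.1 (f.2⁻¹ (f.2 j)) = 0 by simp)
    (inv_mul_cancel _)

@[simp] lemma mul_fst (f g : Gn n) (j : Fin n) : (f * g).1 j = g.1 j + f.1 (g.2 j) := rfl
@[simp] lemma mul_snd (f g : Gn n) : (f * g).2 = f.2 * g.2 := rfl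
@[simp] lemma one_fst (j : Fin n) : (1 : Gn n).1 j = 0 := rfl
@[simp] lemma one_snd : (1 : Gn n).2 = 1 := rfl
@[simp] lemma inv_fst (f : Gn n) (j : Fin n) : (f⁻¹).1 j = -f.1 (f.2⁻¹ j) := rfl
@[simp] lemma inv_snd (f : Gn n) : (f⁻¹).2 = f.2⁻¹ := rfl


/-- The homomorphism `A : G_n → 𝕋`, `A(α, σ) = 2(α_1 + ⋯ + α_n)` (written multiplicatively). -/
noncomputable def A (n : ℕ) : Gn n →* Multiplicative Circle1 where
  toFun f := Multiplicative.ofAdd (2 • ∑ j, f.1 j)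
  map_one' := by simp
  map_mul' f g := by
    have h1 : ∑ j, (f * g).1 j = (∑ j, g.1 j) + ∑ j, f.1 (g.2 j) := by
      simp [Finset.sum_add_distrib]
    show Multiplicative.ofAdd (2 • ∑ j, (f * g).1 j) =
      Multiplicative.ofAdd (2 • ∑ j, f.1 j) * Multiplicative.ofAdd (2 • ∑ j, g.1 j)
    rw [← ofAdd_add, h1, Equiv.sum_comp g.2 f.1, smul_add, add_comm]

end Gn

namespace GnAux
open Gn
variable {n : ℕ}

lemma closure_le_ker : Subgroup.closure {T : Gn n | T * T = 1} ≤ (Gn.A n).ker := by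
  rw [Subgroup.closure_le]
  intro T hT
  simp only [Set.mem_setOf_eq] at hT
  have h1 : ∀ j, T.1 j + T.1 (T.2 j) = 0 := fun j => congrFun (congrArg Prod.fst hT) j
  have h2 : (2 • ∑ j, T.1 j : Circle1) = 0 := by
    have h3 : ∑ j, (T.1 j + T.1 (T.2 j)) = (0 : Circle1) := by simp [h1]
    rw [Finset.sum_add_distrib, Equiv.sum_comp T.2 T.1] at h3
    simpa [two_smul] using h3
  show Gn.A n T = 1
  show Multiplicative.ofAdd (2 • ∑ j, T.1 j) = 1
  rw [h2]; rfl

/-- Permutations with zero translation part, as a hom. -/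
noncomputable def permHom : Equiv.Perm (Fin n) →* Gn n where
  toFun σ := ⟨fun _ => 0, σ⟩
  map_one' := rfl
  map_mul' σ τ := Prod.ext (funext fun _ => (zero_add 0).symm) rfl

lemma perm_mem (σ : Equiv.Perm (Fin n)) :
    (⟨fun _ => 0, σ⟩ : Gn n) ∈ Subgroup.closure {T : Gn n | T * T = 1} := by
  have key : (⊤ : Subgroup (Equiv.Perm (Fin n))) ≤
      Subgroup.comap permHom (Subgroup.closure {T : Gn n | T * T = 1}) := by
    rw [← Equiv.Perm.closure_isSwap, Subgroup.closure_le]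
    intro τ hτ
    simp only [Subgroup.coe_comap, Set.mem_preimage, SetLike.mem_coe]
    apply Subgroup.subset_closure
    show permHom τ * permHom τ = 1
    rw [← map_mul, ← map_one permHom]
    congr 1
    obtain ⟨a, b, hab, rfl⟩ := hτ
    exact Equiv.swap_mul_self a b
  exact key (Subgroup.mem_top σ)

lemma diag_mul (v w : Fin n → Circle1) :
    (⟨v, 1⟩ : Gn n) * ⟨w, 1⟩ = ⟨v + w, 1⟩ :=
  Prod.ext (funext fun j => add_comm (w j) (v j)) (one_mul 1)

lemma pair_mem (i j : Fin n) (t : Circle1) :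
    (⟨fun k => (if k = i then t else 0) + (if k = j then -t else 0), 1⟩ : Gn n)
      ∈ Subgroup.closure {T : Gn n | T * T = 1} := by
  by_cases hij : i = j
  · subst hij
    have : (fun k => (if k = i then t else 0) + (if k = i then -t else 0))
        = (fun _ : Fin n => (0 : Circle1)) := by
      funext k; by_cases h : k = i <;> simp [h]
    rw [this]
    exact Subgroup.one_mem _
  · set v : Fin n → Circle1 := fun k => (if k = i then t else 0) + (if k = j then -t else 0)
    have hv : ∀ k, v (Equiv.swap i j k) = -(v k) := by
      intro k
      by_cases hk : k = i
      · subst hk; simp [v, Equiv.swap_apply_left, hij, Ne.symm hij]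
      · by_cases hk' : k = j
        · subst hk'; simp [v, Equiv.swap_apply_right, hij, Ne.symm hij]
        · rw [Equiv.swap_apply_of_ne_of_ne hk hk']; simp [v, hk, hk']
    have hf : (⟨fun _ => 0, Equiv.swap i j⟩ : Gn n) ∈ Subgroup.closure {T : Gn n | T * T = 1} :=
      perm_mem _
    have hg : (⟨v, Equiv.swap i j⟩ : Gn n) ∈ Subgroup.closure {T : Gn n | T * T = 1} := by
      apply Subgroup.subset_closure
      show (⟨v, Equiv.swap i j⟩ : Gn n) * ⟨v, Equiv.swap i j⟩ = 1
      refine Prod.ext (funext fun k => ?_) (Equiv.swap_mul_self i j)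
      show v k + v (Equiv.swap i j k) = 0
      rw [hv k]; exact add_neg_cancel _
    have := Subgroup.mul_mem _ hf hg
    have heq : (⟨fun _ => 0, Equiv.swap i j⟩ : Gn n) * ⟨v, Equiv.swap i j⟩ = ⟨v, 1⟩ := by
      refine Prod.ext (funext fun k => ?_) (Equiv.swap_mul_self i j)
      show v k + 0 = v k
      exact add_zero _
    rwa [heq] at this

lemma diag_mem (v : Fin n → Circle1) (hv : 2 • ∑ j, v j = 0) :
    (⟨v, 1⟩ : Gn n) ∈ Subgroup.closure {T : Gn n | T * T = 1} := by
  rcases Nat.eq_zero_or_pos n with hn | hn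
  · have : (⟨v, 1⟩ : Gn n) = 1 := by subst hn; exact Subsingleton.elim _ _
    rw [this]; exact Subgroup.one_mem _
  · set i₀ : Fin n := ⟨0, hn⟩
    set s : Circle1 := ∑ j, v j
    set q : Fin n → Fin n → Circle1 := fun j k =>
      (if k = j then v j else 0) + (if k = i₀ then -(v j) else 0)
    have hq : ∀ j, (⟨q j, 1⟩ : Gn n) ∈ Subgroup.closure {T : Gn n | T * T = 1} :=
      fun j => pair_mem j i₀ (v j)
    have hsumq : (⟨∑ j, q j, 1⟩ : Gn n) ∈ Subgroup.closure {T : Gn n | T * T = 1} := by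
      classical
      refine Finset.sum_induction q (fun w => (⟨w, 1⟩ : Gn n) ∈ Subgroup.closure {T : Gn n | T * T = 1}) ?_ ?_ ?_
      · intro a b ha hb
        rw [← diag_mul]
        exact Subgroup.mul_mem _ ha hb
      · exact Subgroup.one_mem _
      · intro j _; exact hq j
    set r : Fin n → Circle1 := fun k => if k = i₀ then s else 0
    have hr : (⟨r, 1⟩ : Gn n) ∈ Subgroup.closure {T : Gn n | T * T = 1} := by
      apply Subgroup.subset_closure
      show (⟨r, 1⟩ : Gn n) * ⟨r, 1⟩ = 1
      rw [diag_mul]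
      refine Prod.ext (funext fun k => ?_) rfl
      show r k + r k = 0
      by_cases hk : k = i₀
      · simp only [r, hk, if_pos rfl]
        simpa [two_smul] using hv
      · simp [r, hk]
    have hvq : v = (∑ j, q j) + r := by
      funext k
      have h1 : (∑ j, q j) k = v k + (if k = i₀ then -s else 0) := by
        rw [Finset.sum_apply]
        simp only [q]
        rw [Finset.sum_add_distrib]
        congr 1
        · simp [Finset.sum_ite_eq' Finset.univ k v]
        · by_cases hk : k = i₀
          · simp [hk, s, Finset.sum_neg_distrib]
          · simp [hk]
      show v k = (∑ j, q j) k + r k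
      rw [h1]
      by_cases hk : k = i₀ <;> simp [r, hk]
    rw [hvq, ← diag_mul]
    exact Subgroup.mul_mem _ hsumq hr

end GnAux


/-- The subgroup of `G_n` generated by its involutions is exactly the kernel of the
homomorphism `A : G_n → 𝕋`, `A(α, σ) = 2(α_1 + ⋯ + α_n)`. -/
theorem stmt9 {n : ℕ} :
    Subgroup.closure {T : Gn n | T * T = 1} = (Gn.A n).ker := by
  apply le_antisymm GnAux.closure_le_ker
  intro f hf
  have hA : Multiplicative.ofAdd (2 • ∑ j, f.1 j) = 1 := hf
  have hsum : (2 • ∑ j, f.1 j : Circle1) = 0 := by simpa only [ofAdd_eq_one] using hA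
  set v : Fin n → Circle1 := fun k => f.1 (f.2⁻¹ k) with hvdef
  have hv : (2 • ∑ j, v j : Circle1) = 0 := by
    rw [show (∑ j, v j) = ∑ j, f.1 j from Equiv.sum_comp f.2⁻¹ f.1]
    exact hsum
  have h1 := GnAux.diag_mem v hv
  have h2 := GnAux.perm_mem (n := n) f.2
  have heq : (⟨v, 1⟩ : Gn n) * ⟨fun _ => 0, f.2⟩ = f := by
    refine Prod.ext (funext fun k => ?_) (one_mul f.2)
    show 0 + v (f.2 k) = f.1 k
    rw [zero_add]
    show f.1 (f.2⁻¹ (f.2 k)) = f.1 k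
    rw [← Equiv.Perm.mul_apply, inv_mul_cancel, Equiv.Perm.one_apply]
  rw [← heq]
  exact Subgroup.mul_mem _ h1 h2
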